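/- arXiv:1801.04575 — 3 statements merged into one kernel-verified Lean document; each statement's English description precedes it below -/
import Mathlib

section
/- The modified Lévy distance d_L is a metric on the set Δ⁺ of distance distribution functions; that is, for all F, G, K ∈ Δ⁺: d_L(F,G) ≥ 0, d_L(F,G) = 0 if and only if F = G, d_L(F,G) = d_L(G,F), and d_L(F,K) ≤ d_L(F,G) + d_L(G,K). -/
open Set Filter Topology

/-- A distance distribution function: nondecreasing, left-continuous,
with values in `[0,1]`, and vanishing on `(-∞, 0]`. -/
def IsDDF (F : ℝ → ℝ) : Prop :=
  Monotone F ∧ (∀ x : ℝ, ContinuousWithinAt F (Set.Iio x) x) ∧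
    (∀ x, 0 ≤ F x ∧ F x ≤ 1) ∧ ∀ x ≤ 0, F x = 0

/-- The condition `(F, G; h)` in the definition of the modified Lévy distance. -/
def LevyCond (F G : ℝ → ℝ) (h : ℝ) : Prop :=
  ∀ x ∈ Set.Ioo (-(1 / h)) (1 / h), F (x - h) - h ≤ G x ∧ G x ≤ F (x + h) + h

/-- The modified Lévy distance on `Δ⁺`. -/
noncomputable def dL (F G : ℝ → ℝ) : ℝ :=
  sInf {h : ℝ | h ∈ Set.Ioc (0 : ℝ) 1 ∧ LevyCond F G h ∧ LevyCond G F h}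

/-- The distribution function `H₀`, equal to `0` on `(-∞, 0]` and `1` on `(0, ∞)`. -/
noncomputable def H0 : ℝ → ℝ := fun x => if x ≤ 0 then 0 else 1

lemma levyCond_one {F G : ℝ → ℝ} (hF : IsDDF F) (hG : IsDDF G) : LevyCond F G 1 := by
  intro x _
  obtain ⟨_, _, hFb, _⟩ := hF
  obtain ⟨_, _, hGb, _⟩ := hG
  exact ⟨by linarith [(hFb (x - 1)).2, (hGb x).1], by linarith [(hGb x).2, (hFb (x + 1)).1]⟩

lemma one_mem_dLset {F G : ℝ → ℝ} (hF : IsDDF F) (hG : IsDDF G) :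
    (1 : ℝ) ∈ {h : ℝ | h ∈ Set.Ioc (0 : ℝ) 1 ∧ LevyCond F G h ∧ LevyCond G F h} :=
  ⟨⟨one_pos, le_refl 1⟩, levyCond_one hF hG, levyCond_one hG hF⟩

lemma dLset_bddBelow (F G : ℝ → ℝ) :
    BddBelow {h : ℝ | h ∈ Set.Ioc (0 : ℝ) 1 ∧ LevyCond F G h ∧ LevyCond G F h} :=
  ⟨0, fun h hh => hh.1.1.le⟩

lemma arith_aux {x h₁ h₂ : ℝ} (hp1 : 0 < h₁) (hp2 : 0 < h₂) (h1le : h₁ ≤ 1)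
    (hs : h₁ + h₂ ≤ 1) (hx : x < 1 / (h₁ + h₂)) : x + h₂ < 1 / h₁ := by
  rw [lt_div_iff₀ hp1]
  rw [lt_div_iff₀ (by linarith : (0:ℝ) < h₁ + h₂)] at hx
  nlinarith [mul_pos (sub_pos.mpr hx) hp1,
    mul_nonneg (by linarith : (0:ℝ) ≤ 1 - h₁ - h₂) hp2.le,
    mul_nonneg (mul_nonneg hp1.le hp2.le) (by linarith : (0:ℝ) ≤ 1 - h₁)]

lemma levyCond_triangle {F G K : ℝ → ℝ} {h₁ h₂ : ℝ}
    (hFmono : Monotone F)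
    (hp1 : 0 < h₁) (hp2 : 0 < h₂) (h1le : h₁ ≤ 1) (hs : h₁ + h₂ ≤ 1)
    (hFG : LevyCond F G h₁) (hGK : LevyCond G K h₂) : LevyCond F K (h₁ + h₂) := by
  intro x hx
  obtain ⟨hxl, hxr⟩ := hx
  have hsum : (0:ℝ) < h₁ + h₂ := by linarith
  -- x ∈ Ioo for h₂
  have h2div : 1 / (h₁ + h₂) ≤ 1 / h₂ := one_div_le_one_div_of_le hp2 (by linarith)
  have hx2 : x ∈ Set.Ioo (-(1 / h₂)) (1 / h₂) := ⟨by linarith, by linarith⟩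
  have hK := hGK x hx2
  -- x + h₂ ∈ Ioo for h₁
  have h1div : 1 / (h₁ + h₂) ≤ 1 / h₁ := one_div_le_one_div_of_le hp1 (by linarith)
  have hxp : x + h₂ ∈ Set.Ioo (-(1 / h₁)) (1 / h₁) := by
    constructor
    · linarith
    · exact arith_aux hp1 hp2 h1le hs hxr
  have hxm : x - h₂ ∈ Set.Ioo (-(1 / h₁)) (1 / h₁) := by
    constructor
    · have := arith_aux hp1 hp2 h1le hs (by linarith : -x < 1 / (h₁ + h₂))
      linarith
    · linarith
  have hGp := hFG (x + h₂) hxp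
  have hGm := hFG (x - h₂) hxm
  constructor
  · have : F (x - (h₁ + h₂)) = F (x - h₂ - h₁) := by ring_nf
    rw [this]
    linarith [hGm.1, hK.1]
  · have : F (x + (h₁ + h₂)) = F (x + h₂ + h₁) := by ring_nf
    rw [this]
    linarith [hGp.2, hK.2]

lemma le_of_dL_eq_zero {F G : ℝ → ℝ} (hF : IsDDF F) (hG : IsDDF G)
    (h0 : dL F G = 0) : ∀ x, F x ≤ G x := by
  intro x
  obtain ⟨hFmono, hFlc, hFb, hF0⟩ := hF
  rcases le_or_gt x 0 with hx | hx
  · rw [hF0 x hx]; exact (hG.2.2.1 x).1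
  by_contra hlt
  push_neg at hlt
  set ε := F x - G x with hε
  have hεpos : 0 < ε := by simp [hε]; linarith
  -- left continuity gives δ
  have hc := hFlc x
  rw [Metric.continuousWithinAt_iff] at hc
  obtain ⟨δ, hδpos, hδ⟩ := hc (ε / 2) (by linarith)
  -- pick h in the set smaller than everything needed
  have hne : {h : ℝ | h ∈ Set.Ioc (0 : ℝ) 1 ∧ LevyCond F G h ∧ LevyCond G F h}.Nonempty :=
    ⟨1, one_mem_dLset ⟨hFmono, hFlc, hFb, hF0⟩ hG⟩
  have hlt' : sInf {h : ℝ | h ∈ Set.Ioc (0 : ℝ) 1 ∧ LevyCond F G h ∧ LevyCond G F h}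
      < min δ (min (ε / 2) (1 / x)) := by
    rw [dL] at h0
    rw [h0]
    exact lt_min hδpos (lt_min (by linarith) (by positivity))
  obtain ⟨h, hhmem, hhlt⟩ := exists_lt_of_csInf_lt hne hlt'
  obtain ⟨⟨hhpos, hh1⟩, hFG, _⟩ := hhmem
  have hhδ : h < δ := lt_of_lt_of_le hhlt (min_le_left _ _)
  have hhε : h < ε / 2 := lt_of_lt_of_le hhlt (le_trans (min_le_right _ _) (min_le_left _ _))
  have hhx : h < 1 / x := lt_of_lt_of_le hhlt (le_trans (min_le_right _ _) (min_le_right _ _))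
  have hxIoo : x ∈ Set.Ioo (-(1 / h)) (1 / h) := by
    constructor
    · have : (0:ℝ) < 1 / h := by positivity
      linarith
    · rw [lt_div_iff₀ hhpos]
      rw [lt_div_iff₀ hx] at hhx
      linarith
  have hkey := (hFG x hxIoo).1
  have hymem : x - h ∈ Set.Iio x := Set.mem_Iio.mpr (by linarith)
  have hdist : dist (x - h) x < δ := by
    rw [Real.dist_eq]
    rw [abs_of_nonpos (by linarith)]
    simp
    linarith
  have := hδ hymem hdist
  rw [Real.dist_eq] at this
  have habs : F x - F (x - h) < ε / 2 := by
    have := abs_lt.mp this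
    linarith [this.1]
  linarith

/-- The modified Lévy distance `d_L` is a metric on `Δ⁺`. -/
theorem dL_isMetric (F G K : ℝ → ℝ) (hF : IsDDF F) (hG : IsDDF G) (hK : IsDDF K) :
    0 ≤ dL F G ∧ (dL F G = 0 ↔ F = G) ∧ dL F G = dL G F ∧ dL F K ≤ dL F G + dL G K := by
  have hbdd : ∀ A B : ℝ → ℝ, BddBelow {h : ℝ | h ∈ Set.Ioc (0 : ℝ) 1 ∧
      LevyCond A B h ∧ LevyCond B A h} := fun A B => dLset_bddBelow A B
  refine ⟨?_, ⟨?_, ?_⟩, ?_, ?_⟩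
  · exact le_csInf ⟨1, one_mem_dLset hF hG⟩ fun h hh => hh.1.1.le
  · -- dL F G = 0 → F = G
    intro h0
    have h0' : dL G F = 0 := by
      rw [← h0, dL, dL]
      congr 1
      ext h
      simp only [Set.mem_setOf_eq]
      tauto
    funext x
    exact le_antisymm (le_of_dL_eq_zero hF hG h0 x) (le_of_dL_eq_zero hG hF h0' x)
  · -- F = G → dL F G = 0
    rintro rfl
    have hset : {h : ℝ | h ∈ Set.Ioc (0 : ℝ) 1 ∧ LevyCond F F h ∧ LevyCond F F h}
        = Set.Ioc (0 : ℝ) 1 := by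
      ext h
      simp only [Set.mem_setOf_eq, and_self_iff, and_iff_left_iff_imp]
      rintro ⟨hh1, hh2⟩
      intro x _
      constructor
      · linarith [hF.1 (show x - h ≤ x by linarith)]
      · linarith [hF.1 (show x ≤ x + h by linarith)]
    rw [dL, hset, csInf_Ioc one_pos]
  · rw [dL, dL]
    congr 1
    ext h
    simp only [Set.mem_setOf_eq]
    tauto
  · -- triangle
    refine le_of_forall_pos_le_add fun ε hε => ?_
    have hne1 : {h : ℝ | h ∈ Set.Ioc (0 : ℝ) 1 ∧ LevyCond F G h ∧ LevyCond G F h}.Nonempty :=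
      ⟨1, one_mem_dLset hF hG⟩
    have hne2 : {h : ℝ | h ∈ Set.Ioc (0 : ℝ) 1 ∧ LevyCond G K h ∧ LevyCond K G h}.Nonempty :=
      ⟨1, one_mem_dLset hG hK⟩
    obtain ⟨h₁, hm1, hlt1⟩ := exists_lt_of_csInf_lt hne1
      (show dL F G < dL F G + ε / 2 by linarith)
    obtain ⟨h₂, hm2, hlt2⟩ := exists_lt_of_csInf_lt hne2
      (show dL G K < dL G K + ε / 2 by linarith)
    obtain ⟨⟨hp1, h1le⟩, hFG, hGF⟩ := hm1
    obtain ⟨⟨hp2, h2le⟩, hGK, hKG⟩ := hm2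
    have hd1 : 0 ≤ dL F G := le_csInf hne1 fun h hh => hh.1.1.le
    have hd2 : 0 ≤ dL G K := le_csInf hne2 fun h hh => hh.1.1.le
    rcases le_or_gt (h₁ + h₂) 1 with hs | hs
    · have hmem : h₁ + h₂ ∈ {h : ℝ | h ∈ Set.Ioc (0 : ℝ) 1 ∧
          LevyCond F K h ∧ LevyCond K F h} := by
        refine ⟨⟨by linarith, hs⟩, levyCond_triangle hF.1 hp1 hp2 h1le hs hFG hGK, ?_⟩
        have := levyCond_triangle hK.1 hp2 hp1 h2le (by linarith) hKG hGF
        rwa [add_comm] at this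
      have := csInf_le (hbdd F K) hmem
      rw [dL]
      linarith
    · have : dL F K ≤ 1 := csInf_le (hbdd F K) (one_mem_dLset hF hK)
      linarith
end

section
/- The metric space (Δ⁺, d_L) is compact, and hence complete. -/
open Set Filter Topology

/-- The defining set of `dL`. -/
def levySet (F G : ℝ → ℝ) : Set ℝ :=
  {h : ℝ | h ∈ Set.Ioc (0 : ℝ) 1 ∧ LevyCond F G h ∧ LevyCond G F h}

lemma dL_eq (F G : ℝ → ℝ) : dL F G = sInf (levySet F G) := rfl

lemma one_mem_levySet {F G : ℝ → ℝ} (hF : IsDDF F) (hG : IsDDF G) :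
    (1 : ℝ) ∈ levySet F G := by
  refine ⟨⟨one_pos, le_refl _⟩, ?_, ?_⟩ <;>
  · intro x _
    have h1 := (hF.2.2.1 (x - 1)).2
    have h2 := (hG.2.2.1 x).1
    have h3 := (hG.2.2.1 (x - 1)).2
    have h4 := (hF.2.2.1 x).1
    have h5 := (hF.2.2.1 (x + 1)).1
    have h6 := (hG.2.2.1 x).2
    have h7 := (hG.2.2.1 (x + 1)).1
    have h8 := (hF.2.2.1 x).2
    constructor <;> linarith

lemma levySet_bddBelow (F G : ℝ → ℝ) : BddBelow (levySet F G) :=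
  ⟨0, fun h hh => le_of_lt hh.1.1⟩

lemma dL_nonneg (F G : ℝ → ℝ) : 0 ≤ dL F G :=
  Real.sInf_nonneg (fun h hh => le_of_lt hh.1.1)

lemma dL_le_of_mem {F G : ℝ → ℝ} {h : ℝ} (hh : h ∈ levySet F G) : dL F G ≤ h :=
  csInf_le (levySet_bddBelow F G) hh

lemma levyCond_trans {F G K : ℝ → ℝ} {h h' : ℝ} (h1 : LevyCond F G h)
    (h2 : LevyCond G K h') (hh : 0 < h) (hh' : 0 < h') (hle : h ≤ 1) (hle' : h' ≤ 1)
    (hsum : h + h' ≤ 1) : LevyCond F K (h + h') := by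
  intro x hx
  obtain ⟨hx1, hx2⟩ := hx
  set s := h + h' with hs
  have hspos : 0 < s := by positivity
  have hA : 1 / s + h' ≤ 1 / h := by
    have e3 : h * s ≤ 1 := by nlinarith
    have key : (1 / s + h') * (h * s) ≤ (1 / h) * (h * s) := by
      have l0 : (1 / s) * (h * s) = h := by field_simp
      have l2 : (1 / h) * (h * s) = s := by field_simp
      rw [add_mul, l0, l2]
      nlinarith
    exact le_of_mul_le_mul_right key (mul_pos hh hspos)
  have hB : 1 / s ≤ 1 / h' := by
    apply one_div_le_one_div_of_le hh'; linarith
  have hC : 1 / s ≤ 1 / h := by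
    apply one_div_le_one_div_of_le hh; linarith
  have hxIoo : x ∈ Set.Ioo (-(1 / h')) (1 / h') := ⟨by linarith, by linarith⟩
  have h2x := h2 x hxIoo
  have hup := h1 (x + h') ⟨by linarith, by linarith⟩
  have hlo := h1 (x - h') ⟨by linarith, by linarith⟩
  constructor
  · have : x - s = (x - h') - h := by ring
    rw [this]
    linarith [hlo.1, h2x.1]
  · have : x + s = (x + h') + h := by ring
    rw [this]
    linarith [hup.2, h2x.2]

lemma deltaPlus_seq_compact : ∀ F : ℕ → ℝ → ℝ, (∀ n, IsDDF (F n)) →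
    ∃ G : ℝ → ℝ, IsDDF G ∧ ∃ φ : ℕ → ℕ, StrictMono φ ∧
      Filter.Tendsto (fun n => dL (F (φ n)) G) Filter.atTop (nhds 0) := by
  intro F hF
  -- Step 1: a pointwise convergent (on ℚ) subsequence via compactness of `ℚ → [0,1]`.
  set u : ℕ → (ℚ → Set.Icc (0:ℝ) 1) := fun n q => ⟨F n q, (hF n).2.2.1 q⟩ with hu
  obtain ⟨L, -, φ, hφ, hLconv⟩ :=
    IsCompact.tendsto_subseq (x := u) isCompact_univ (fun n => mem_univ _)
  set g : ℚ → ℝ := fun q => (L q : ℝ) with hgdef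
  have hg : ∀ q : ℚ, Tendsto (fun n => F (φ n) (q : ℝ)) atTop (𝓝 (g q)) := by
    intro q
    have h1 := tendsto_pi_nhds.1 hLconv q
    exact (continuous_subtype_val.tendsto _).comp h1
  have hg01 : ∀ q, 0 ≤ g q ∧ g q ≤ 1 := fun q => ⟨(L q).2.1, (L q).2.2⟩
  have hgmono : ∀ q q' : ℚ, q ≤ q' → g q ≤ g q' := by
    intro q q' hqq
    exact le_of_tendsto_of_tendsto' (hg q) (hg q')
      (fun n => (hF (φ n)).1 (by exact_mod_cast hqq))
  have hg0 : ∀ q : ℚ, q ≤ 0 → g q = 0 := by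
    intro q hq
    have h2 : Tendsto (fun _ : ℕ => (0:ℝ)) atTop (𝓝 (g q)) := by
      have heq : (fun n : ℕ => F (φ n) (q:ℝ)) = fun _ => (0:ℝ) :=
        funext fun n => (hF (φ n)).2.2.2 _ (by exact_mod_cast hq)
      rw [← heq]; exact hg q
    exact (tendsto_nhds_unique tendsto_const_nhds h2).symm
  -- Step 2: define the limit d.d.f. `G`.
  set G : ℝ → ℝ := fun x => sSup (g '' {q : ℚ | (q:ℝ) < x}) with hGdef
  have hne : ∀ x : ℝ, (g '' {q : ℚ | (q:ℝ) < x}).Nonempty := by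
    intro x; obtain ⟨q, hq⟩ := exists_rat_lt x; exact ⟨g q, ⟨q, hq, rfl⟩⟩
  have hbdd : ∀ x : ℝ, BddAbove (g '' {q : ℚ | (q:ℝ) < x}) := by
    intro x
    refine ⟨1, ?_⟩
    rintro y ⟨q, -, rfl⟩
    exact (hg01 q).2
  have hlt : ∀ (q : ℚ) (x : ℝ), (q:ℝ) < x → g q ≤ G x :=
    fun q x hq => le_csSup (hbdd x) ⟨q, hq, rfl⟩
  have hge : ∀ (q : ℚ) (x : ℝ), x ≤ (q:ℝ) → G x ≤ g q := by
    intro q x hx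
    apply csSup_le (hne x)
    rintro y ⟨q', hq', rfl⟩
    exact hgmono q' q (by exact_mod_cast (lt_of_lt_of_le hq' hx).le)
  have hGmono : Monotone G := by
    intro x y hxy
    apply csSup_le (hne x)
    rintro z ⟨q, hq, rfl⟩
    exact hlt q y (lt_of_lt_of_le hq hxy)
  have hG01 : ∀ x, 0 ≤ G x ∧ G x ≤ 1 := by
    intro x
    obtain ⟨q, hq⟩ := exists_rat_lt x
    refine ⟨le_trans (hg01 q).1 (hlt q x hq), csSup_le (hne x) ?_⟩
    rintro y ⟨q', -, rfl⟩
    exact (hg01 q').2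
  have hG0 : ∀ x ≤ 0, G x = 0 := by
    intro x hx
    refine le_antisymm ?_ (hG01 x).1
    apply csSup_le (hne x)
    rintro y ⟨q, hq, rfl⟩
    rw [hg0 q (by exact_mod_cast (lt_of_lt_of_le hq hx).le)]
  have hGleft : ∀ x : ℝ, ContinuousWithinAt G (Set.Iio x) x := by
    intro x
    have ht := hGmono.tendsto_nhdsLT x
    have heq : sSup (G '' Set.Iio x) = G x := by
      have hbddG : BddAbove (G '' Set.Iio x) := by
        refine ⟨G x, ?_⟩
        rintro z ⟨y, hy, rfl⟩
        exact hGmono hy.le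
      apply le_antisymm
      · have hne2 : (G '' Set.Iio x).Nonempty :=
          ⟨G (x - 1), ⟨x - 1, show x - 1 < x by linarith, rfl⟩⟩
        apply csSup_le hne2
        rintro z ⟨y, hy, rfl⟩
        exact hGmono hy.le
      · apply csSup_le (hne x)
        rintro z ⟨q, hq, rfl⟩
        obtain ⟨y, hy1, hy2⟩ := exists_between (show (q:ℝ) < x from hq)
        exact le_trans (hlt q y hy1) (le_csSup hbddG ⟨y, hy2, rfl⟩)
    show Tendsto G (𝓝[<] x) (𝓝 (G x))
    rwa [heq] at ht
  -- Step 3: `dL (F (φ n)) G → 0`.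
  have key : ∀ ε : ℝ, 0 < ε → ε ≤ 1 → ∀ᶠ n in atTop, dL (F (φ n)) G ≤ ε := by
    intro ε hε hε1
    obtain ⟨r, hr0, hr⟩ := exists_rat_btwn (show (0:ℝ) < ε/4 by linarith)
    have hr0' : (0:ℝ) < (r:ℝ) := hr0
    set M : ℤ := ⌈(1/ε + 1)/(r:ℝ)⌉ + 1 with hM
    have hMbound : (1/ε + 1)/(r:ℝ) + 1 ≤ (M:ℝ) := by
      rw [hM]
      push_cast
      linarith [Int.le_ceil ((1/ε + 1)/(r:ℝ))]
    have hev : ∀ᶠ n in atTop, ∀ j ∈ Finset.Icc (-M) M,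
        |F (φ n) ((((j:ℚ) * r : ℚ)):ℝ) - g ((j:ℚ)*r)| < ε/2 := by
      rw [eventually_all_finset]
      intro j _
      have h1 := hg ((j:ℚ)*r)
      rw [Metric.tendsto_atTop] at h1
      obtain ⟨N, hN⟩ := h1 (ε/2) (by linarith)
      rw [eventually_atTop]
      exact ⟨N, fun n hn => by simpa [Real.dist_eq] using hN n hn⟩
    filter_upwards [hev] with n hn
    apply dL_le_of_mem
    have hsel : ∀ t : ℝ, -(1/ε) - 1 < t → t < 1/ε →
        ∃ q : ℚ, t ≤ (q:ℝ) ∧ (q:ℝ) < t + r ∧ |F (φ n) q - g q| < ε/2 := by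
      intro t ht1 ht2
      set j : ℤ := ⌈t/(r:ℝ)⌉ with hj
      have hjl : t/(r:ℝ) ≤ (j:ℝ) := Int.le_ceil _
      have hju : (j:ℝ) < t/(r:ℝ) + 1 := Int.ceil_lt_add_one _
      have hcast : (((j:ℚ) * r : ℚ):ℝ) = (j:ℝ) * (r:ℝ) := by push_cast; ring
      have htr : (t/(r:ℝ)) * (r:ℝ) = t := div_mul_cancel₀ t (ne_of_gt hr0')
      have hq1 : t ≤ (((j:ℚ) * r : ℚ):ℝ) := by
        rw [hcast]
        nlinarith [mul_le_mul_of_nonneg_right hjl (le_of_lt hr0')]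
      have hq2 : (((j:ℚ) * r : ℚ):ℝ) < t + r := by
        rw [hcast]
        nlinarith [mul_lt_mul_of_pos_right hju hr0']
      have hmem : j ∈ Finset.Icc (-M) M := by
        rw [Finset.mem_Icc]
        have b1 : t/(r:ℝ) < (1/ε + 1)/(r:ℝ) := (div_lt_div_iff_of_pos_right hr0').2 (by linarith)
        have b2 : (-(1/ε) - 1)/(r:ℝ) < t/(r:ℝ) := (div_lt_div_iff_of_pos_right hr0').2 ht1
        have b3 : (-(1/ε) - 1)/(r:ℝ) = -((1/ε + 1)/(r:ℝ)) := by ring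
        have hb1 : (j:ℝ) ≤ (M:ℝ) := by linarith
        have hb2 : ((-M : ℤ):ℝ) ≤ (j:ℝ) := by push_cast; linarith
        exact ⟨by exact_mod_cast hb2, by exact_mod_cast hb1⟩
      exact ⟨(j:ℚ) * r, hq1, hq2, hn j hmem⟩
    refine ⟨⟨hε, hε1⟩, ?_, ?_⟩
    · intro x hx
      obtain ⟨hx1, hx2⟩ := hx
      obtain ⟨q1, hq1a, hq1b, hq1c⟩ := hsel (x - ε) (by linarith) (by linarith)
      obtain ⟨q2, hq2a, hq2b, hq2c⟩ := hsel x (by linarith) hx2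
      have habs1 := abs_lt.1 hq1c
      have habs2 := abs_lt.1 hq2c
      constructor
      · have m1 : F (φ n) (x - ε) ≤ F (φ n) q1 := (hF (φ n)).1 hq1a
        have m2 : g q1 ≤ G x := hlt q1 x (by linarith)
        linarith [habs1.2]
      · have m1 : G x ≤ g q2 := hge q2 x hq2a
        have m2 : F (φ n) q2 ≤ F (φ n) (x + ε) := (hF (φ n)).1 (by linarith)
        linarith [habs2.1]
    · intro x hx
      obtain ⟨hx1, hx2⟩ := hx
      obtain ⟨q1, hq1a, hq1b, hq1c⟩ := hsel (x - ε) (by linarith) (by linarith)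
      obtain ⟨q2, hq2a, hq2b, hq2c⟩ := hsel x (by linarith) hx2
      have habs1 := abs_lt.1 hq1c
      have habs2 := abs_lt.1 hq2c
      constructor
      · have m1 : G (x - ε) ≤ g q1 := hge q1 (x - ε) hq1a
        have m2 : F (φ n) q1 ≤ F (φ n) x := (hF (φ n)).1 (by linarith)
        linarith [habs1.1]
      · have m1 : F (φ n) x ≤ F (φ n) q2 := (hF (φ n)).1 hq2a
        have m2 : g q2 ≤ G (x + ε) := hlt q2 (x + ε) (by linarith)
        linarith [habs2.2]
  refine ⟨G, ⟨hGmono, hGleft, hG01, hG0⟩, φ, hφ, ?_⟩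
  rw [tendsto_order]
  constructor
  · intro a ha
    filter_upwards with n
    exact lt_of_lt_of_le ha (dL_nonneg _ _)
  · intro a ha
    have h1 : 0 < min a 1 / 2 := by
      have := lt_min ha zero_lt_one
      positivity
    filter_upwards [key (min a 1 / 2) h1 (by
      have : min a 1 ≤ 1 := min_le_right a 1
      linarith)] with n hn
    calc dL (F (φ n)) G ≤ min a 1 / 2 := hn
    _ < min a 1 := half_lt_self (lt_min ha zero_lt_one)
    _ ≤ a := min_le_left a 1

/-- The metric space `(Δ⁺, d_L)` is compact (every sequence of d.d.f.'s
has a subsequence converging in `d_L` to a d.d.f.), and hence complete (every `d_L`-Cauchy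
sequence of d.d.f.'s converges in `d_L` to a d.d.f.). -/
theorem DeltaPlus_compact_and_complete :
    (∀ F : ℕ → ℝ → ℝ, (∀ n, IsDDF (F n)) →
      ∃ G : ℝ → ℝ, IsDDF G ∧ ∃ φ : ℕ → ℕ, StrictMono φ ∧
        Filter.Tendsto (fun n => dL (F (φ n)) G) Filter.atTop (nhds 0)) ∧
    (∀ F : ℕ → ℝ → ℝ, (∀ n, IsDDF (F n)) →
      (∀ ε > (0 : ℝ), ∃ N : ℕ, ∀ m ≥ N, ∀ n ≥ N, dL (F m) (F n) < ε) →
      ∃ G : ℝ → ℝ, IsDDF G ∧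
        Filter.Tendsto (fun n => dL (F n) G) Filter.atTop (nhds 0)) := by
  constructor
  · exact deltaPlus_seq_compact
  · intro F hF hC
    obtain ⟨G, hG, φ, hφ, htend⟩ := deltaPlus_seq_compact F hF
    refine ⟨G, hG, ?_⟩
    rw [tendsto_order]
    refine ⟨fun a ha => ?_, fun a ha => ?_⟩
    · filter_upwards with n
      exact lt_of_lt_of_le ha (dL_nonneg _ _)
    · set ε := min a 1 with hεdef
      have hε0 : 0 < ε := lt_min ha zero_lt_one
      have hε1 : ε ≤ 1 := min_le_right a 1
      have hεa : ε ≤ a := min_le_left a 1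
      obtain ⟨N1, hN1⟩ := hC (ε/3) (by positivity)
      have h2 : ∀ᶠ m in atTop, dL (F (φ m)) G < ε/3 :=
        (tendsto_order.1 htend).2 (ε/3) (by positivity)
      obtain ⟨m, hm1, hm2⟩ := (h2.and (eventually_ge_atTop N1)).exists
      rw [eventually_atTop]
      refine ⟨N1, fun n hn => ?_⟩
      have hφm : N1 ≤ φ m := le_trans hm2 hφ.le_apply
      have hd1 : dL (F n) (F (φ m)) < ε/3 := hN1 n hn (φ m) hφm
      have hne1 : (levySet (F n) (F (φ m))).Nonempty :=
        ⟨1, one_mem_levySet (hF n) (hF (φ m))⟩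
      obtain ⟨h1, hh1, hh1lt⟩ := exists_lt_of_csInf_lt hne1 hd1
      have hne2 : (levySet (F (φ m)) G).Nonempty := ⟨1, one_mem_levySet (hF (φ m)) hG⟩
      obtain ⟨h2', hh2, hh2lt⟩ := exists_lt_of_csInf_lt hne2 hm1
      have hp1 : 0 < h1 := hh1.1.1
      have hp2 : 0 < h2' := hh2.1.1
      have hsum : h1 + h2' ≤ 1 := by linarith
      have c1 : LevyCond (F n) G (h1 + h2') :=
        levyCond_trans hh1.2.1 hh2.2.1 hp1 hp2 hh1.1.2 hh2.1.2 hsum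
      have c2 : LevyCond G (F n) (h1 + h2') := by
        rw [add_comm]
        exact levyCond_trans hh2.2.2 hh1.2.2 hp2 hp1 hh2.1.2 hh1.1.2 (by linarith)
      have hmem : (h1 + h2') ∈ levySet (F n) G :=
        ⟨⟨by linarith, hsum⟩, c1, c2⟩
      calc dL (F n) G ≤ h1 + h2' := dL_le_of_mem hmem
      _ < ε := by linarith
      _ ≤ a := hεa
end

section
/- Let (S, 𝓕, τ) be a probabilistic metric space under a continuous triangle function τ, and let A, B be nonempty subsets of S. If A ∩ B is nonempty, then D_{A∪B} ≥ τ(D_A, D_B) pointwise. -/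
open Set Filter Topology

/-- A triangle function: a binary operation on `Δ⁺` that is commutative, associative,
nondecreasing in each argument, and has `H₀` as identity. -/
def IsTriangleFunction (τ : (ℝ → ℝ) → (ℝ → ℝ) → (ℝ → ℝ)) : Prop :=
  (∀ F G, IsDDF F → IsDDF G → IsDDF (τ F G)) ∧
  (∀ F G, IsDDF F → IsDDF G → τ F G = τ G F) ∧
  (∀ F G K, IsDDF F → IsDDF G → IsDDF K → τ (τ F G) K = τ F (τ G K)) ∧
  (∀ F G K, IsDDF F → IsDDF G → IsDDF K → F ≤ G → τ F K ≤ τ G K) ∧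
  (∀ F, IsDDF F → τ H0 F = F)

/-- Continuity of a triangle function with respect to the modified Lévy metric on `Δ⁺`
(sequential continuity, which is equivalent since `d_L` is a metric). -/
def ContinuousTF (τ : (ℝ → ℝ) → (ℝ → ℝ) → (ℝ → ℝ)) : Prop :=
  ∀ (F G : ℕ → ℝ → ℝ) (F₀ G₀ : ℝ → ℝ),
    (∀ n, IsDDF (F n)) → (∀ n, IsDDF (G n)) → IsDDF F₀ → IsDDF G₀ →
    Filter.Tendsto (fun n => dL (F n) F₀) Filter.atTop (nhds 0) →
    Filter.Tendsto (fun n => dL (G n) G₀) Filter.atTop (nhds 0) →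
    Filter.Tendsto (fun n => dL (τ (F n) (G n)) (τ F₀ G₀)) Filter.atTop (nhds 0)

/-- `(S, 𝓕, τ)` is a probabilistic metric space. -/
structure IsPMSpace {S : Type*} (𝓕 : S → S → ℝ → ℝ)
    (τ : (ℝ → ℝ) → (ℝ → ℝ) → (ℝ → ℝ)) : Prop where
  ddf : ∀ p q, IsDDF (𝓕 p q)
  tf : IsTriangleFunction τ
  refl : ∀ p, 𝓕 p p = H0
  ne : ∀ p q, p ≠ q → 𝓕 p q ≠ H0
  symm : ∀ p q, 𝓕 p q = 𝓕 q p
  tri : ∀ p q r, τ (𝓕 p q) (𝓕 q r) ≤ 𝓕 p r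

/-- The probabilistic diameter of a set: `D_A(x) = sup_{t<x} inf_{p,q ∈ A} F_{p,q}(t)`
for `x > 0`, and `0` for `x ≤ 0`. -/
noncomputable def probDiam {S : Type*} (𝓕 : S → S → ℝ → ℝ) (A : Set S) (x : ℝ) : ℝ :=
  if x ≤ 0 then 0
  else sSup ((fun t => sInf ((fun pq : S × S => 𝓕 pq.1 pq.2 t) '' (A ×ˢ A))) '' Set.Iio x)

/-! ### Auxiliary lemmas -/

section Aux

lemma isDDF_H0 : IsDDF H0 := by
  refine ⟨?_, ?_, ?_, ?_⟩
  · intro a b hab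
    unfold H0
    split_ifs <;> norm_num <;> linarith
  · intro x
    rcases le_or_gt x 0 with hx | hx
    · have hev : ∀ᶠ t in nhdsWithin x (Set.Iio x), H0 t = H0 x := by
        filter_upwards [self_mem_nhdsWithin] with t ht
        simp [H0, (lt_of_lt_of_le ht hx).le, hx]
      exact Filter.Tendsto.congr' (by filter_upwards [hev] with t ht using ht.symm)
        tendsto_const_nhds
    · have hmem : Set.Ioo (0:ℝ) x ∈ nhdsWithin x (Set.Iio x) :=
        Ioo_mem_nhdsLT_of_mem ⟨hx, le_refl x⟩
      have hev : ∀ᶠ t in nhdsWithin x (Set.Iio x), H0 t = H0 x := by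
        filter_upwards [hmem] with t ht
        simp [H0, not_le.2 ht.1, not_le.2 hx]
      exact Filter.Tendsto.congr' (by filter_upwards [hev] with t ht using ht.symm)
        tendsto_const_nhds
  · intro x; unfold H0; split_ifs <;> norm_num
  · intro x hx; simp [H0, hx]

lemma ddf_le_H0 {F : ℝ → ℝ} (hF : IsDDF F) : F ≤ H0 := by
  intro x
  rcases le_or_gt x 0 with hx | hx
  · simp [H0, hx, hF.2.2.2 x hx]
  · simpa [H0, not_le.2 hx] using (hF.2.2.1 x).2

/-- Left-continuity + monotonicity: `sSup (F '' Iio x) = F x`. -/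
lemma ddf_sSup_Iio {F : ℝ → ℝ} (hF : IsDDF F) (x : ℝ) :
    sSup (F '' Set.Iio x) = F x :=
  tendsto_nhds_unique (hF.1.tendsto_nhdsLT x) (hF.2.1 x)

variable {S : Type*}

/-- The pointwise infimum `inf_{p,q ∈ A} F_{p,q}(t)`. -/
noncomputable def pinf (𝓕 : S → S → ℝ → ℝ) (A : Set S) (t : ℝ) : ℝ :=
  sInf ((fun pq : S × S => 𝓕 pq.1 pq.2 t) '' (A ×ˢ A))

variable {𝓕 : S → S → ℝ → ℝ} {A : Set S}

lemma pinf_set_nonempty (hA : A.Nonempty) (t : ℝ) :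
    ((fun pq : S × S => 𝓕 pq.1 pq.2 t) '' (A ×ˢ A)).Nonempty := by
  obtain ⟨a, ha⟩ := hA
  exact ⟨_, ⟨(a, a), ⟨ha, ha⟩, rfl⟩⟩

lemma pinf_set_subset (h𝓕 : ∀ p q, IsDDF (𝓕 p q)) (t : ℝ) :
    ((fun pq : S × S => 𝓕 pq.1 pq.2 t) '' (A ×ˢ A)) ⊆ Set.Icc 0 1 := by
  rintro _ ⟨⟨p, q⟩, _, rfl⟩
  exact (h𝓕 p q).2.2.1 t

lemma pinf_nonneg (h𝓕 : ∀ p q, IsDDF (𝓕 p q)) (hA : A.Nonempty) (t : ℝ) :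
    0 ≤ pinf 𝓕 A t :=
  le_csInf (pinf_set_nonempty hA t) fun b hb => ((pinf_set_subset h𝓕 t) hb).1

lemma pinf_le (h𝓕 : ∀ p q, IsDDF (𝓕 p q)) {p q : S} (hp : p ∈ A) (hq : q ∈ A) (t : ℝ) :
    pinf 𝓕 A t ≤ 𝓕 p q t :=
  csInf_le ⟨0, fun b hb => ((pinf_set_subset h𝓕 t) hb).1⟩ ⟨(p, q), ⟨hp, hq⟩, rfl⟩

lemma pinf_le_one (h𝓕 : ∀ p q, IsDDF (𝓕 p q)) (hA : A.Nonempty) (t : ℝ) :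
    pinf 𝓕 A t ≤ 1 := by
  obtain ⟨a, ha⟩ := hA
  exact le_trans (pinf_le h𝓕 ha ha t) ((h𝓕 a a).2.2.1 t).2

lemma probDiam_eq_sSup_pinf (x : ℝ) (hx : 0 < x) :
    probDiam 𝓕 A x = sSup (pinf 𝓕 A '' Set.Iio x) := by
  simp [probDiam, not_le.2 hx, pinf]; rfl

lemma probDiam_nonneg (h𝓕 : ∀ p q, IsDDF (𝓕 p q)) (hA : A.Nonempty) (x : ℝ) :
    0 ≤ probDiam 𝓕 A x := by
  rcases le_or_gt x 0 with hx | hx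
  · simp [probDiam, hx]
  · rw [probDiam_eq_sSup_pinf x hx]
    refine le_csSup_of_le ⟨1, ?_⟩ ⟨x - 1, by simp, rfl⟩ (pinf_nonneg h𝓕 hA _)
    rintro _ ⟨t, _, rfl⟩; exact pinf_le_one h𝓕 hA t

lemma probDiam_le_ddf (h𝓕 : ∀ p q, IsDDF (𝓕 p q)) {p q : S}
    (hp : p ∈ A) (hq : q ∈ A) (x : ℝ) : probDiam 𝓕 A x ≤ 𝓕 p q x := by
  rcases le_or_gt x 0 with hx | hx
  · simpa [probDiam, hx] using ((h𝓕 p q).2.2.1 x).1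
  · rw [probDiam_eq_sSup_pinf x hx]
    refine csSup_le ⟨pinf 𝓕 A (x - 1), ⟨x - 1, by simp, rfl⟩⟩ ?_
    rintro _ ⟨t, ht, rfl⟩
    exact le_trans (pinf_le h𝓕 hp hq t) ((h𝓕 p q).1 (le_of_lt ht))

lemma probDiam_mono (h𝓕 : ∀ p q, IsDDF (𝓕 p q)) (hA : A.Nonempty) :
    Monotone (probDiam 𝓕 A) := by
  intro x y hxy
  rcases le_or_gt x 0 with hx | hx
  · rw [show probDiam 𝓕 A x = 0 by simp [probDiam, hx]]
    exact probDiam_nonneg h𝓕 hA y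
  · rw [probDiam_eq_sSup_pinf x hx, probDiam_eq_sSup_pinf y (lt_of_lt_of_le hx hxy)]
    refine csSup_le_csSup ⟨1, ?_⟩ ⟨pinf 𝓕 A (x - 1), ⟨x - 1, by simp, rfl⟩⟩
      (Set.image_mono (Set.Iio_subset_Iio hxy))
    rintro _ ⟨t, _, rfl⟩; exact pinf_le_one h𝓕 hA t

lemma probDiam_sSup (h𝓕 : ∀ p q, IsDDF (𝓕 p q)) (hA : A.Nonempty) (x : ℝ) :
    sSup (probDiam 𝓕 A '' Set.Iio x) = probDiam 𝓕 A x := by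
  have hbdd : BddAbove (probDiam 𝓕 A '' Set.Iio x) := by
    refine ⟨probDiam 𝓕 A x, ?_⟩
    rintro _ ⟨t, ht, rfl⟩
    exact probDiam_mono h𝓕 hA (le_of_lt ht)
  have hne : (probDiam 𝓕 A '' Set.Iio x).Nonempty := ⟨_, ⟨x - 1, by simp, rfl⟩⟩
  rcases le_or_gt x 0 with hx | hx
  · rw [show probDiam 𝓕 A x = 0 by simp [probDiam, hx]]
    refine le_antisymm (csSup_le hne ?_) (le_csSup hbdd ⟨x - 1, by simp, ?_⟩)
    · rintro _ ⟨t, ht, rfl⟩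
      simp [probDiam, le_of_lt (lt_of_lt_of_le ht hx)]
    · simp [probDiam, show x - 1 ≤ 0 by linarith]
  · refine le_antisymm (csSup_le hne ?_) ?_
    · rintro _ ⟨t, ht, rfl⟩
      exact probDiam_mono h𝓕 hA (le_of_lt ht)
    · rw [probDiam_eq_sSup_pinf x hx]
      refine csSup_le ⟨_, ⟨x - 1, by simp, rfl⟩⟩ ?_
      rintro _ ⟨s, hs, rfl⟩
      set t : ℝ := (max s 0 + x) / 2 with ht
      have h1 : 0 < t := by
        have := le_max_right s 0; simp only [ht]; linarith [Set.mem_Iio.1 hs,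
          max_lt (Set.mem_Iio.1 hs) hx]
      have h2 : s < t := by
        have := le_max_left s 0
        have := max_lt (Set.mem_Iio.1 hs) hx
        simp only [ht]; linarith
      have h3 : t < x := by
        have := max_lt (Set.mem_Iio.1 hs) hx
        simp only [ht]; linarith
      have hle : pinf 𝓕 A s ≤ probDiam 𝓕 A t := by
        rw [probDiam_eq_sSup_pinf t h1]
        refine le_csSup ⟨1, ?_⟩ ⟨s, h2, rfl⟩
        rintro _ ⟨u, _, rfl⟩; exact pinf_le_one h𝓕 hA u
      exact le_trans hle (le_csSup hbdd ⟨t, h3, rfl⟩)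

lemma probDiam_isDDF (h𝓕 : ∀ p q, IsDDF (𝓕 p q)) (hA : A.Nonempty) :
    IsDDF (probDiam 𝓕 A) := by
  have hmono := probDiam_mono h𝓕 hA
  refine ⟨hmono, ?_, ?_, fun x hx => by simp [probDiam, hx]⟩
  · intro x
    have := hmono.tendsto_nhdsLT x
    rwa [probDiam_sSup h𝓕 hA x] at this
  · intro x
    refine ⟨probDiam_nonneg h𝓕 hA x, ?_⟩
    rcases le_or_gt x 0 with hx | hx
    · simp [probDiam, hx]
    · rw [probDiam_eq_sSup_pinf x hx]
      refine csSup_le ⟨_, ⟨x - 1, by simp, rfl⟩⟩ ?_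
      rintro _ ⟨t, _, rfl⟩; exact pinf_le_one h𝓕 hA t

end Aux

/-- In a PM space with continuous triangle function, if `A ∩ B ≠ ∅`,
then `D_{A ∪ B} ≥ τ(D_A, D_B)` pointwise. -/
theorem probDiam_union {S : Type*} [Nonempty S]
    (𝓕 : S → S → ℝ → ℝ) (τ : (ℝ → ℝ) → (ℝ → ℝ) → (ℝ → ℝ))
    (hPM : IsPMSpace 𝓕 τ) (hτ : ContinuousTF τ) (A B : Set S)
    (hA : A.Nonempty) (hB : B.Nonempty) (hAB : (A ∩ B).Nonempty) :
    τ (probDiam 𝓕 A) (probDiam 𝓕 B) ≤ probDiam 𝓕 (A ∪ B) := by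
  obtain ⟨c, hcA, hcB⟩ := hAB
  have h𝓕 := hPM.ddf
  have hDA : IsDDF (probDiam 𝓕 A) := probDiam_isDDF h𝓕 hA
  have hDB : IsDDF (probDiam 𝓕 B) := probDiam_isDDF h𝓕 hB
  obtain ⟨tddf, tcomm, tassoc, tmono, tid⟩ := hPM.tf
  have hT : IsDDF (τ (probDiam 𝓕 A) (probDiam 𝓕 B)) := tddf _ _ hDA hDB
  -- monotonicity in the second argument
  have mono2 : ∀ F G K, IsDDF F → IsDDF G → IsDDF K → G ≤ K → τ F G ≤ τ F K := by
    intro F G K hF hG hK h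
    rw [tcomm F G hF hG, tcomm F K hF hK]
    exact tmono G K F hG hK hF h
  -- key: T ≤ 𝓕 p q for all p, q ∈ A ∪ B
  have caseAB : ∀ p ∈ A, ∀ q ∈ B, τ (probDiam 𝓕 A) (probDiam 𝓕 B) ≤ 𝓕 p q := by
    intro p hp q hq
    calc τ (probDiam 𝓕 A) (probDiam 𝓕 B)
        ≤ τ (𝓕 p c) (probDiam 𝓕 B) :=
          tmono _ _ _ hDA (h𝓕 p c) hDB (fun t => probDiam_le_ddf h𝓕 hp hcA t)
      _ ≤ τ (𝓕 p c) (𝓕 c q) :=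
          mono2 _ _ _ (h𝓕 p c) hDB (h𝓕 c q) (fun t => probDiam_le_ddf h𝓕 hcB hq t)
      _ ≤ 𝓕 p q := hPM.tri p c q
  have caseAA : ∀ p ∈ A, ∀ q ∈ A, τ (probDiam 𝓕 A) (probDiam 𝓕 B) ≤ 𝓕 p q := by
    intro p hp q hq
    calc τ (probDiam 𝓕 A) (probDiam 𝓕 B)
        ≤ τ (probDiam 𝓕 A) H0 := mono2 _ _ _ hDA hDB isDDF_H0 (ddf_le_H0 hDB)
      _ = probDiam 𝓕 A := by rw [tcomm _ _ hDA isDDF_H0, tid _ hDA]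
      _ ≤ 𝓕 p q := fun t => probDiam_le_ddf h𝓕 hp hq t
  have caseBB : ∀ p ∈ B, ∀ q ∈ B, τ (probDiam 𝓕 A) (probDiam 𝓕 B) ≤ 𝓕 p q := by
    intro p hp q hq
    calc τ (probDiam 𝓕 A) (probDiam 𝓕 B)
        ≤ τ H0 (probDiam 𝓕 B) := tmono _ _ _ hDA isDDF_H0 hDB (ddf_le_H0 hDA)
      _ = probDiam 𝓕 B := tid _ hDB
      _ ≤ 𝓕 p q := fun t => probDiam_le_ddf h𝓕 hp hq t
  have key : ∀ p ∈ A ∪ B, ∀ q ∈ A ∪ B, ∀ t : ℝ,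
      τ (probDiam 𝓕 A) (probDiam 𝓕 B) t ≤ 𝓕 p q t := by
    rintro p (hp | hp) q (hq | hq) t
    · exact caseAA p hp q hq t
    · exact caseAB p hp q hq t
    · rw [hPM.symm p q]; exact caseAB q hq p hp t
    · exact caseBB p hp q hq t
  -- conclude
  intro x
  rcases le_or_gt x 0 with hx | hx
  · rw [hT.2.2.2 x hx]
    exact probDiam_nonneg h𝓕 (hA.mono Set.subset_union_left) x
  · have hUne : (A ∪ B).Nonempty := hA.mono Set.subset_union_left
    have hkey : ∀ t : ℝ, τ (probDiam 𝓕 A) (probDiam 𝓕 B) t ≤ pinf 𝓕 (A ∪ B) t := by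
      intro t
      refine le_csInf (pinf_set_nonempty hUne t) ?_
      rintro _ ⟨⟨p, q⟩, ⟨hp, hq⟩, rfl⟩
      exact key p hp q hq t
    rw [← ddf_sSup_Iio hT x, probDiam_eq_sSup_pinf x hx]
    have hbdd : BddAbove (pinf 𝓕 (A ∪ B) '' Set.Iio x) := by
      refine ⟨1, ?_⟩
      rintro _ ⟨t, _, rfl⟩
      exact pinf_le_one h𝓕 hUne t
    refine csSup_le ⟨_, ⟨x - 1, by simp, rfl⟩⟩ ?_
    rintro _ ⟨t, ht, rfl⟩
    exact le_trans (hkey t) (le_csSup hbdd ⟨t, ht, rfl⟩)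
end
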